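/- For every natural number r and every category C with finite coproducts and object X, the stabilization homomorphism Aut(T_r) → Aut(T_{r+1}), sending an automorphism u of T_r to the automorphism of T_{r+1} obtained by transporting u ⊔ 𝟙_X along the canonical isomorphism T_r ⊔ T_1 ≅ T_{r+1}, is an injective group homomorphism. (This is the paper's proposition that for every Lawvere theory T the stabilization maps Aut(T_r) → Aut(T_{r+1}) are injective.) -/

import Mathlib

open CategoryTheory CategoryTheory.Limits

universe u v

variable {C : Type u} [Category.{v} C]

/-- `T X r` is the coproduct of `r` copies of `X`, indexed by `Fin r`;
it models the free model of rank `r` of a Lawvere theory with `X = T_1`. -/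
noncomputable def T [HasFiniteCoproducts C] (X : C) (r : ℕ) : C :=
  ∐ (fun _ : Fin r => X)

/-- The canonical isomorphism `T_r ⊔ T_1 ≅ T_{r+1}`. -/
noncomputable def stabIso [HasFiniteCoproducts C] (X : C) (r : ℕ) :
    T X r ⨿ X ≅ T X (r + 1) :=
  (coprod.braiding (T X r) X).trans <|
    IsColimit.coconePointUniqueUpToIso
      (extendCofanIsColimit (fun _ : Fin (r + 1) => X)
        (coproductIsCoproduct (fun _ : Fin r => X))
        (coprodIsCoprod X (T X r)))
      (coproductIsCoproduct (fun _ : Fin (r + 1) => X))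

/-- The stabilization homomorphism `Aut (T_r) →* Aut (T_{r+1})`, sending an
automorphism `u` of `T_r` to the automorphism of `T_{r+1}` obtained by
transporting `u ⊔ 𝟙_X` along the canonical isomorphism `T_r ⊔ T_1 ≅ T_{r+1}`. -/
noncomputable def stabHom [HasFiniteCoproducts C] (X : C) (r : ℕ) :
    Aut (T X r) →* Aut (T X (r + 1)) :=
  ((stabIso X r).conjAut.toMonoidHom).comp ((coprod.functor.flip.obj X).mapAut (X := T X r))

/-- For every Lawvere theory `T`, the stabilization maps
`Aut (T_r) → Aut (T_{r+1})` are injective. -/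
theorem stabHom_injective [HasFiniteCoproducts C] (X : C) (r : ℕ) :
    Function.Injective (stabHom X r) := by
  intro u₁ u₂ h
  have h' : (coprod.functor.flip.obj X).mapAut (X := T X r) u₁ =
      (coprod.functor.flip.obj X).mapAut (X := T X r) u₂ :=
    (stabIso X r).conjAut.injective h
  have hw : coprod.map u₁.hom (𝟙 X) = coprod.map u₂.hom (𝟙 X) := by
    have := congrArg (fun (a : Aut (T X r ⨿ X)) => a.hom) h'
    exact this
  have key : u₁.hom ≫ (coprod.inl : T X r ⟶ T X r ⨿ X) = u₂.hom ≫ coprod.inl := by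
    have h1 : coprod.inl ≫ coprod.map u₁.hom (𝟙 X) = u₁.hom ≫ coprod.inl := by simp
    have h2 : coprod.inl ≫ coprod.map u₂.hom (𝟙 X) = u₂.hom ≫ coprod.inl := by simp
    rw [← h1, ← h2, hw]
  apply Iso.ext
  show (u₁.hom : (∐ fun _ : Fin r => X) ⟶ _) = u₂.hom
  apply Sigma.hom_ext
  intro i
  calc Sigma.ι (fun _ : Fin r => X) i ≫ u₁.hom
      = Sigma.ι (fun _ : Fin r => X) i ≫ (u₁.hom ≫ coprod.inl) ≫
        coprod.desc (𝟙 _) (Sigma.ι (fun _ : Fin r => X) i) := by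
        exact (congrArg (fun g => Sigma.ι (fun _ : Fin r => X) i ≫ g) ((Category.assoc _ _ _).trans ((congrArg (fun g => u₁.hom ≫ g) (coprod.inl_desc _ _)).trans (Category.comp_id _)))).symm
    _ = Sigma.ι (fun _ : Fin r => X) i ≫ (u₂.hom ≫ coprod.inl) ≫
        coprod.desc (𝟙 _) (Sigma.ι (fun _ : Fin r => X) i) := by exact congrArg (fun g => Sigma.ι (fun _ : Fin r => X) i ≫ g ≫ coprod.desc (𝟙 _) (Sigma.ι (fun _ : Fin r => X) i)) key
    _ = Sigma.ι (fun _ : Fin r => X) i ≫ u₂.hom := by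
        exact (congrArg (fun g => Sigma.ι (fun _ : Fin r => X) i ≫ g) ((Category.assoc _ _ _).trans ((congrArg (fun g => u₂.hom ≫ g) (coprod.inl_desc _ _)).trans (Category.comp_id _))))
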